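/- For every positive integer N, every real number β with 0 < β < 1/(N+1), and every m ∈ ℤ_+, there exist infinitely many translation vectors t = (t_0, t_1, …, t_m) ∈ ℝ^{m+1} with 0 = t_0 < t_1 < … < t_m such that Γ_t = ⋃_{j=0}^m (Γ + t_j) is a self-similar set. -/
import Mathlib


noncomputable section

namespace HSCantor

/-- A `D`-coding of `x`: a digit sequence `c` with digits in `D ⊆ ℤ` such that
`x = (1-β)/N · Σ_{k=1}^∞ c_k β^{k-1}` (here indexed from `k = 0`). -/
def IsCoding (N : ℕ) (β : ℝ) (D : Set ℤ) (x : ℝ) (c : ℕ → ℤ) : Prop :=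
  (∀ k, c k ∈ D) ∧ x = (1 - β) / N * ∑' k : ℕ, (c k : ℝ) * β ^ k

/-- The set `Γ_{β,D}` for a digit set `D ⊆ ℤ`. -/
def cantorD (N : ℕ) (β : ℝ) (D : Set ℤ) : Set ℝ := { x | ∃ c, IsCoding N β D x c }

/-- The homogeneous symmetric Cantor set `Γ = Γ_{β,{0,1,…,N}}`. -/
def Gamma (N : ℕ) (β : ℝ) : Set ℝ := cantorD N β (Set.Icc 0 (N : ℤ))

/-- `E ⊆ ℝ` is a self-similar set: it is nonempty, compact, and is the union of its
images under finitely many contracting similitudes `x ↦ r x + b`, `0 < |r| < 1`. -/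
def IsSelfSimilar (E : Set ℝ) : Prop :=
  E.Nonempty ∧ IsCompact E ∧ ∃ F : Finset (ℝ × ℝ),
    (∀ p ∈ F, 0 < |p.1| ∧ |p.1| < 1) ∧
    E = ⋃ p ∈ F, (fun x => p.1 * x + p.2) '' E

/-- `Γ_t = ⋃_{j=0}^m (Γ + t_j)`. -/
def GammaT (N : ℕ) (β : ℝ) {m : ℕ} (t : Fin (m + 1) → ℝ) : Set ℝ :=
  ⋃ j, (fun x => x + t j) '' Gamma N β

/-- The set `T = ⋃_{n≥1} { (1-β)/N · Σ_{k=1}^n j_k β^{-k} : j_k ∈ {0,…,N} }`. -/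
def Tset (N : ℕ) (β : ℝ) : Set ℝ :=
  { x | ∃ n : ℕ, 1 ≤ n ∧ ∃ c : ℕ → ℕ, (∀ k, c k ≤ N) ∧
      x = (1 - β) / N * ∑ k ∈ Finset.Icc 1 n, (c k : ℝ) * β ^ (-(k : ℤ)) }

/-- `d` is a digit representation of the translation vector `t` with `τ` digits:
`t_j = (1-β)/N · Σ_{k=1}^τ d_{j,k} β^{-k}` with all digits in `{0,…,N}`. -/
def IsDigitRep (N : ℕ) (β : ℝ) {m : ℕ} (t : Fin (m + 1) → ℝ) (τ : ℕ)
    (d : Fin (m + 1) → ℕ → ℕ) : Prop :=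
  (∀ j k, d j k ≤ N) ∧
    ∀ j, t j = (1 - β) / N * ∑ k ∈ Finset.Icc 1 τ, (d j k : ℝ) * β ^ (-(k : ℤ))

/-- `d` is a digit representation of `t` with `τ = τ_t` digits, `τ_t` minimal. -/
def IsMinimalRep (N : ℕ) (β : ℝ) {m : ℕ} (t : Fin (m + 1) → ℝ) (τ : ℕ)
    (d : Fin (m + 1) → ℕ → ℕ) : Prop :=
  IsDigitRep N β t τ d ∧ ∀ τ' < τ, ∀ d', ¬ IsDigitRep N β t τ' d'

/-- `s_k = max_{0 ≤ j ≤ m} t_{j,k}`. -/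
def digitSup {m : ℕ} (d : Fin (m + 1) → ℕ → ℕ) (k : ℕ) : ℕ :=
  Finset.univ.sup fun j => d j k

/-- Words of length `n` over the alphabet `{0,1,…,N}`, as lists of naturals. -/
def Words (N n : ℕ) : Set (List ℕ) := { w | w.length = n ∧ ∀ x ∈ w, x ≤ N }

/-- `Ω_t^n`: words `i_1 … i_n ∈ {0,…,N}^n` with `i_{n+1-k} ≤ N - s_k` for `1 ≤ k ≤ τ`.
(A list `w = [i_1, …, i_n]` satisfies `i_{n+1-k} = w.getD (n-k) 0`.) -/
def Omega (N τ : ℕ) (s : ℕ → ℕ) (n : ℕ) : Set (List ℕ) :=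
  { w | w ∈ Words N n ∧ ∀ k, 1 ≤ k → k ≤ τ → w.getD (n - k) 0 + s k ≤ N }

/-- `Ω̂_t^n`: words `i_1 … i_n ∈ {0,…,N}^n` with `i_{n+1-k} ≥ s_k` for `1 ≤ k ≤ τ`. -/
def OmegaHat (N τ : ℕ) (s : ℕ → ℕ) (n : ℕ) : Set (List ℕ) :=
  { w | w ∈ Words N n ∧ ∀ k, 1 ≤ k → k ≤ τ → s k ≤ w.getD (n - k) 0 }

/-- `W_t^τ = A_t^τ ∪ Â_t^τ`: words obtained from a word in `Ω_t^τ` (resp. `Ω̂_t^τ`)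
by adding (resp. subtracting) the digits of some `t_j` to the last `τ` positions. -/
def Wset (N : ℕ) {m : ℕ} (τ : ℕ) (d : Fin (m + 1) → ℕ → ℕ) : Set (List ℕ) :=
  { v | ∃ w ∈ Omega N τ (digitSup d) τ, ∃ j : Fin (m + 1),
      v = List.ofFn fun idx : Fin τ => w.getD idx 0 + d j (τ - (idx : ℕ)) } ∪
  { v | ∃ w ∈ OmegaHat N τ (digitSup d) τ, ∃ j : Fin (m + 1),
      v = List.ofFn fun idx : Fin τ => w.getD idx 0 - d j (τ - (idx : ℕ)) }

/-- The symbolic admissibility condition: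
`⋃_{n=τ}^ℓ {0,…,N}^{n-τ} × W_t^τ × {0,…,N}^{ℓ-n} = {0,…,N}^ℓ` for some `ℓ ≥ τ`. -/
def AdmissibleWith (N : ℕ) {m : ℕ} (τ : ℕ) (d : Fin (m + 1) → ℕ → ℕ) : Prop :=
  ∃ ℓ, τ ≤ ℓ ∧
    (⋃ n ∈ Finset.Icc τ ℓ,
      { z : List ℕ | ∃ u ∈ Words N (n - τ), ∃ w ∈ Wset N τ d, ∃ v ∈ Words N (ℓ - n),
          z = u ++ w ++ v }) = Words N ℓ

/-- `t` is an admissible translation vector. -/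
def IsAdmissible (N : ℕ) (β : ℝ) {m : ℕ} (t : Fin (m + 1) → ℝ) : Prop :=
  (∀ j, t j ∈ Tset N β) ∧
    ∃ τ d, IsMinimalRep N β t τ d ∧ AdmissibleWith N τ d

/-- The vertex set `V_t = {0,…,N}^τ \ W_t^τ` of the directed graph `G_t`. -/
def Vset (N : ℕ) {m : ℕ} (τ : ℕ) (d : Fin (m + 1) → ℕ → ℕ) : Set (List ℕ) :=
  Words N τ \ Wset N τ d

/-- The graph on `V` with an edge `i → j` iff `i_2 … i_τ = j_1 … j_{τ-1}` has a cycle: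
a directed path of positive length starting and ending at the same vertex. -/
def HasCycle (V : Set (List ℕ)) : Prop :=
  ∃ (L : ℕ) (p : ℕ → List ℕ), 0 < L ∧ (∀ i ≤ L, p i ∈ V) ∧
    (∀ i < L, (p i).drop 1 = (p (i + 1)).dropLast) ∧ p 0 = p L

open Classical in
/-- The adjacency matrix of the directed graph `G_t`, indexed by all words of length `τ`
over `{0,…,N}`; its `(i,j)` entry is `1` exactly when `i, j ∈ V_t` and there is a
directed edge `i → j`, and the rows and columns outside `V_t` are zero. -/
def adjMat (N τ : ℕ) (V : Set (List ℕ)) :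
    Matrix (Fin τ → Fin (N + 1)) (Fin τ → Fin (N + 1)) ℕ :=
  fun i j =>
    if (List.ofFn fun k => (i k : ℕ)) ∈ V ∧ (List.ofFn fun k => (j k : ℕ)) ∈ V ∧
        (List.ofFn fun k => (i k : ℕ)).drop 1 = (List.ofFn fun k => (j k : ℕ)).dropLast
    then 1 else 0

/-- `φ_i(x) = βx + i(1-β)/N`. -/
def phi (N : ℕ) (β : ℝ) (i : ℕ) (x : ℝ) : ℝ := β * x + i * (1 - β) / N

/-- `φ_{i_1 … i_n} = φ_{i_1} ∘ ⋯ ∘ φ_{i_n}`. -/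
def phiWord (N : ℕ) (β : ℝ) (w : List ℕ) (x : ℝ) : ℝ := w.foldr (phi N β) x

/-- The conjugate translation vector `t̂_j = t_m - t_{m-j}`. -/
def conj {m : ℕ} (t : Fin (m + 1) → ℝ) : Fin (m + 1) → ℝ :=
  fun j => t (Fin.last m) - t ⟨m - (j : ℕ), Nat.lt_succ_of_le (Nat.sub_le m j)⟩

/-! ### Auxiliary definitions and lemmas for `stmt0` -/

section Aux

open Finset in
private lemma hsc_bin_lt (z : ℕ → ℕ) (hz : ∀ k, z k ≤ 1) (L : ℕ) :
    (∑ k ∈ Finset.range L, z k * 2 ^ k) < 2 ^ L := by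
  induction L with
  | zero => simp
  | succ L IH =>
    rw [Finset.sum_range_succ]
    have h1 : z L * 2 ^ L ≤ 2 ^ L := by
      calc z L * 2 ^ L ≤ 1 * 2 ^ L := Nat.mul_le_mul_right _ (hz L)
        _ = 2 ^ L := one_mul _
    have h2 : (2:ℕ) ^ (L + 1) = 2 ^ L + 2 ^ L := by rw [pow_succ]; omega
    omega

private lemma hsc_bin_decode (z : ℕ → ℕ) (hz : ∀ k, z k ≤ 1) {L k₀ : ℕ} (hk : k₀ < L) :
    (∑ k ∈ Finset.range L, z k * 2 ^ k) / 2 ^ k₀ % 2 = z k₀ := by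
  induction L with
  | zero => omega
  | succ L IH =>
    rw [Finset.sum_range_succ]
    rcases Nat.lt_or_ge k₀ L with h | h
    · have hd : z L * 2 ^ L = 2 ^ k₀ * (z L * 2 ^ (L - k₀)) := by
        rw [show (2:ℕ) ^ L = 2 ^ k₀ * 2 ^ (L - k₀) by rw [← pow_add]; congr 1; omega]
        ring
      rw [hd, Nat.add_mul_div_left _ _ (by positivity)]
      have heven : 2 ∣ z L * 2 ^ (L - k₀) :=
        Dvd.dvd.mul_left (dvd_pow_self 2 (by omega)) _
      obtain ⟨e, he⟩ := heven
      rw [he, Nat.add_mul_mod_self_left]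
      exact IH h
    · have hkL : k₀ = L := by omega
      subst hkL
      have hS : (∑ k ∈ Finset.range k₀, z k * 2 ^ k) < 2 ^ k₀ := hsc_bin_lt z hz k₀
      rw [show z k₀ * 2 ^ k₀ = 2 ^ k₀ * z k₀ by ring,
        Nat.add_mul_div_left _ _ (by positivity), Nat.div_eq_of_lt hS, zero_add]
      have := hz k₀; omega

private lemma hsc_bitmod {k L : ℕ} (h : k < L) (x : ℕ) :
    x % 2 ^ L / 2 ^ k % 2 = x / 2 ^ k % 2 := by
  rw [show (2:ℕ) ^ L = 2 ^ k * 2 ^ (L - k) by rw [← pow_add]; congr 1; omega,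
    Nat.mod_mul_right_div_self]
  exact Nat.mod_mod_of_dvd _ (dvd_pow_self 2 (by omega))

/-- Weighted digit sum `Σ_{i<L} w i · β^i`. -/
def wsum (β : ℝ) (w : ℕ → ℕ) (L : ℕ) : ℝ := ∑ i ∈ Finset.range L, (w i : ℝ) * β ^ i

/-- The `i`-th digit (from the most significant side, `τ` positions) of `j` in binary. -/
def bw (τ j : ℕ) : ℕ → ℕ := fun i => j / 2 ^ (τ - 1 - i) % 2

lemma bw_le_one (τ j i : ℕ) : bw τ j i ≤ 1 := by
  unfold bw; omega

/-- The translation vectors: `tfun N β m p j = β^{-(log₂ m + 1 + p)} · (1-β)/N ·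
Σ_{i<τ} bit_{τ-1-i}(j) β^i` where `τ = log₂ m + 1`. -/
def tfun (N : ℕ) (β : ℝ) (m p : ℕ) : Fin (m + 1) → ℝ :=
  fun j => (β ^ (Nat.log 2 m + 1 + p))⁻¹ *
    ((1 - β) / N * wsum β (bw (Nat.log 2 m + 1) (j : ℕ)) (Nat.log 2 m + 1))

lemma wsum_nonneg {β : ℝ} (hβ0 : 0 ≤ β) (w : ℕ → ℕ) (L : ℕ) : 0 ≤ wsum β w L :=
  Finset.sum_nonneg fun i _ => by positivity

lemma wsum_congr {β : ℝ} {w v : ℕ → ℕ} {L : ℕ} (h : ∀ i < L, w i = v i) :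
    wsum β w L = wsum β v L :=
  Finset.sum_congr rfl fun i hi => by rw [h i (Finset.mem_range.mp hi)]

lemma wsum_add {β : ℝ} (w v : ℕ → ℕ) (L : ℕ) :
    wsum β (fun i => w i + v i) L = wsum β w L + wsum β v L := by
  unfold wsum
  rw [← Finset.sum_add_distrib]
  exact Finset.sum_congr rfl fun i _ => by push_cast; ring

lemma wsum_split {β : ℝ} (w : ℕ → ℕ) (τ q : ℕ) :
    wsum β w (τ + q) = wsum β w τ + β ^ τ * wsum β (fun i => w (τ + i)) q := by
  induction q with
  | zero => simp [wsum]
  | succ q IH =>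
    rw [show τ + (q + 1) = (τ + q) + 1 from rfl]
    unfold wsum at *
    rw [Finset.sum_range_succ, IH, Finset.sum_range_succ, pow_add]
    ring

lemma summable_dig {N : ℕ} {β : ℝ} (hβ0 : 0 ≤ β) (hβ1 : β < 1) (c : ℕ → ℕ)
    (hc : ∀ k, c k ≤ N) : Summable fun k => (c k : ℝ) * β ^ k := by
  apply Summable.of_nonneg_of_le (fun k => by positivity) (fun k => ?_)
    ((summable_geometric_of_lt_one hβ0 hβ1).mul_left (N : ℝ))
  have h1 : (c k : ℝ) ≤ N := by exact_mod_cast hc k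
  have h2 : (0:ℝ) ≤ β ^ k := by positivity
  nlinarith

lemma mem_gamma {N : ℕ} {β x : ℝ} :
    x ∈ Gamma N β ↔ ∃ c : ℕ → ℕ, (∀ k, c k ≤ N) ∧
      x = (1 - β) / N * ∑' k : ℕ, (c k : ℝ) * β ^ k := by
  constructor
  · rintro ⟨c, hc, hx⟩
    refine ⟨fun k => (c k).toNat, fun k => ?_, ?_⟩
    · have h := hc k; rw [Set.mem_Icc] at h
      show (c k).toNat ≤ N
      omega
    · rw [hx]
      have h3 : (∑' k : ℕ, (((fun k => (c k).toNat) k : ℕ) : ℝ) * β ^ k)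
          = ∑' k : ℕ, ((c k : ℤ) : ℝ) * β ^ k := by
        apply tsum_congr fun k => ?_
        have h := hc k; rw [Set.mem_Icc] at h
        have h2 : ((c k).toNat : ℤ) = c k := Int.toNat_of_nonneg h.1
        rw [← h2]; push_cast; ring
      rw [h3]
  · rintro ⟨c, hc, hx⟩
    refine ⟨fun k => (c k : ℤ), fun k => Set.mem_Icc.mpr
      ⟨Int.ofNat_nonneg _, by show ((c k : ℤ)) ≤ (N : ℤ); exact_mod_cast hc k⟩, ?_⟩
    rw [hx]
    have h3 : (∑' k : ℕ, (((fun k => (c k : ℤ)) k : ℤ) : ℝ) * β ^ k)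
        = ∑' k : ℕ, ((c k : ℕ) : ℝ) * β ^ k := by
      apply tsum_congr fun k => ?_
      push_cast; ring
    rw [h3]

lemma gamma_zero {N : ℕ} {β : ℝ} : (0:ℝ) ∈ Gamma N β := by
  rw [mem_gamma]
  exact ⟨fun _ => 0, fun _ => Nat.zero_le N, by simp⟩

lemma gamma_add_word {N : ℕ} {β γ : ℝ} (hβ0 : 0 ≤ β) (hβ1 : β < 1)
    (w : ℕ → ℕ) (hw : ∀ i, w i ≤ N) (n : ℕ) (hγ : γ ∈ Gamma N β) :
    β ^ n * γ + (1 - β) / N * wsum β w n ∈ Gamma N β := by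
  rw [mem_gamma] at hγ ⊢
  obtain ⟨c, hc, rfl⟩ := hγ
  have hbound : ∀ k, (if k < n then w k else c (k - n)) ≤ N := by
    intro k; split
    · exact hw k
    · exact hc _
  refine ⟨fun k => if k < n then w k else c (k - n), hbound, ?_⟩
  have hsum : Summable (fun k => ((if k < n then w k else c (k - n) : ℕ) : ℝ) * β ^ k) :=
    summable_dig hβ0 hβ1 _ hbound
  rw [← Summable.sum_add_tsum_nat_add n hsum]
  have h1 : ∑ i ∈ Finset.range n, ((if i < n then w i else c (i - n) : ℕ) : ℝ) * β ^ i
      = wsum β w n := by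
    apply Finset.sum_congr rfl
    intro i hi
    rw [if_pos (Finset.mem_range.mp hi)]
  have h2 : ∑' i : ℕ, ((if i + n < n then w (i + n) else c (i + n - n) : ℕ) : ℝ) * β ^ (i + n)
      = (∑' i : ℕ, (c i : ℝ) * β ^ i) * β ^ n := by
    rw [← tsum_mul_right]
    apply tsum_congr
    intro i
    rw [if_neg (by omega), Nat.add_sub_cancel, pow_add]
    ring
  rw [h1, h2]
  ring

lemma gamma_decomp {N : ℕ} {β γ : ℝ} (hβ0 : 0 ≤ β) (hβ1 : β < 1) (n : ℕ)
    (hγ : γ ∈ Gamma N β) :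
    ∃ (w : ℕ → ℕ) (γ' : ℝ), (∀ i, w i ≤ N) ∧ γ' ∈ Gamma N β ∧
      γ = β ^ n * γ' + (1 - β) / N * wsum β w n := by
  rw [mem_gamma] at hγ
  obtain ⟨c, hc, rfl⟩ := hγ
  refine ⟨c, (1 - β) / N * ∑' k : ℕ, (c (k + n) : ℝ) * β ^ k, hc,
    mem_gamma.mpr ⟨fun k => c (k + n), fun k => hc _, rfl⟩, ?_⟩
  have hsum : Summable fun k => (c k : ℝ) * β ^ k := summable_dig hβ0 hβ1 c hc
  rw [← Summable.sum_add_tsum_nat_add n hsum]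
  have h2 : ∑' i : ℕ, (c (i + n) : ℝ) * β ^ (i + n)
      = (∑' i : ℕ, (c (i + n) : ℝ) * β ^ i) * β ^ n := by
    rw [← tsum_mul_right]
    exact tsum_congr fun i => by rw [pow_add]; ring
  rw [h2]
  unfold wsum
  ring

lemma gamma_symm {N : ℕ} {β γ : ℝ} (hN : 0 < N) (hβ0 : 0 ≤ β) (hβ1 : β < 1)
    (hγ : γ ∈ Gamma N β) : 1 - γ ∈ Gamma N β := by
  rw [mem_gamma] at hγ ⊢
  obtain ⟨c, hc, rfl⟩ := hγ
  refine ⟨fun k => N - c k, fun k => by show N - c k ≤ N; omega, ?_⟩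
  have hs1 : Summable fun k : ℕ => (N : ℝ) * β ^ k :=
    (summable_geometric_of_lt_one hβ0 hβ1).mul_left _
  have hs2 : Summable fun k => (c k : ℝ) * β ^ k := summable_dig hβ0 hβ1 c hc
  have h1 : ∀ k : ℕ, ((N - c k : ℕ) : ℝ) * β ^ k = (N:ℝ) * β ^ k - (c k : ℝ) * β ^ k := by
    intro k
    rw [Nat.cast_sub (hc k)]
    ring
  rw [tsum_congr h1, Summable.tsum_sub hs1 hs2, tsum_mul_left,
    tsum_geometric_of_lt_one hβ0 hβ1]
  have hNr : (N:ℝ) ≠ 0 := Nat.cast_ne_zero.mpr (by omega)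
  have hb : (1:ℝ) - β ≠ 0 := by linarith
  have key : (1 - β) / N * ((N:ℝ) * (1 - β)⁻¹) = 1 := by field_simp
  rw [mul_sub, key]

lemma gamma_compact {N : ℕ} {β : ℝ} (hβ0 : 0 ≤ β) (hβ1 : β < 1) :
    IsCompact (Gamma N β) := by
  have hrange : Gamma N β = Set.range (fun c : ℕ → Fin (N + 1) =>
      (1 - β) / N * ∑' k : ℕ, ((c k : ℕ) : ℝ) * β ^ k) := by
    ext x
    rw [mem_gamma]
    constructor
    · rintro ⟨c, hc, rfl⟩
      exact ⟨fun k => ⟨c k, by have := hc k; omega⟩, by norm_num⟩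
    · rintro ⟨c, rfl⟩
      exact ⟨fun k => (c k : ℕ), fun k => by show ((c k : ℕ)) ≤ N; have := (c k).isLt; omega, rfl⟩
  rw [hrange]
  apply isCompact_range
  apply Continuous.mul continuous_const
  apply continuous_tsum (u := fun k : ℕ => (N : ℝ) * β ^ k)
  · intro k
    exact Continuous.mul
      ((continuous_of_discreteTopology (f := fun v : Fin (N+1) => ((v : ℕ) : ℝ))).comp
        (continuous_apply k)) continuous_const
  · exact (summable_geometric_of_lt_one hβ0 hβ1).mul_left _
  · intro k c
    have h1 : |((c k : ℕ) : ℝ)| ≤ (N : ℝ) := by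
      rw [abs_of_nonneg (by positivity)]
      exact_mod_cast Nat.lt_succ_iff.mp (c k).isLt
    have h2 : |β ^ k| = β ^ k := abs_of_nonneg (by positivity)
    rw [Real.norm_eq_abs, abs_mul, h2]
    have h3 : (0:ℝ) ≤ β ^ k := by positivity
    nlinarith [abs_nonneg ((c k : ℕ) : ℝ)]

private lemma hsc_wsum_lt_inv {β : ℝ} (hβ0 : 0 ≤ β) (hβh : β < 1/2)
    (w : ℕ → ℕ) (hw : ∀ i, w i ≤ 1) (L : ℕ) : β * wsum β w L < 1 := by
  have h1 : wsum β w L ≤ ∑ i ∈ Finset.range L, β ^ i := by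
    apply Finset.sum_le_sum
    intro i _
    have h2 : (w i : ℝ) ≤ 1 := by exact_mod_cast hw i
    have h3 : (0:ℝ) ≤ β ^ i := by positivity
    nlinarith
  have hgeom : (∑ i ∈ Finset.range L, β ^ i) * (β - 1) = β ^ L - 1 := geom_sum_mul β L
  have hpow : (0:ℝ) ≤ β ^ L := by positivity
  have hws : 0 ≤ wsum β w L := wsum_nonneg hβ0 w L
  have hgs : (0:ℝ) ≤ ∑ i ∈ Finset.range L, β ^ i :=
    Finset.sum_nonneg fun i _ => by positivity
  nlinarith [mul_le_mul_of_nonneg_left h1 hβ0]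

private lemma hsc_fL_mono {β : ℝ} (hβ0 : 0 < β) (hβh : β < 1/2) :
    ∀ L a b : ℕ, a < b → b < 2 ^ L → wsum β (bw L a) L < wsum β (bw L b) L := by
  intro L
  induction L with
  | zero => intro a b hab hb; simp at hb; omega
  | succ L IH =>
    have key : ∀ x : ℕ, wsum β (bw (L+1) x) (L+1)
        = ((x / 2 ^ L % 2 : ℕ) : ℝ) + β * wsum β (bw L (x % 2 ^ L)) L := by
      intro x
      unfold wsum
      rw [Finset.sum_range_succ']
      have h0 : bw (L+1) x 0 = x / 2 ^ L % 2 := by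
        unfold bw; norm_num
      have h1 : ∀ i ∈ Finset.range L, ((bw (L+1) x (i+1) : ℕ) : ℝ) * β ^ (i+1)
          = β * (((bw L (x % 2 ^ L) i : ℕ) : ℝ) * β ^ i) := by
        intro i hi
        rw [Finset.mem_range] at hi
        have e1 : bw (L+1) x (i+1) = bw L (x % 2 ^ L) i := by
          unfold bw
          rw [show L + 1 - 1 - (i+1) = L - 1 - i by omega]
          exact (hsc_bitmod (by omega) x).symm
        rw [e1, pow_succ]
        ring
      rw [Finset.sum_congr rfl h1, h0, ← Finset.mul_sum]
      ring
    intro a b hab hb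
    rw [key a, key b]
    have hta : a / 2 ^ L ≤ b / 2 ^ L := Nat.div_le_div_right hab.le
    have h2L : (0:ℕ) < 2 ^ L := by positivity
    have htb : b / 2 ^ L ≤ 1 := by
      have hb' : b < 2 ^ L * 2 := by rw [← pow_succ]; exact hb
      have h2 : b / 2 ^ L < 2 := Nat.div_lt_of_lt_mul hb'
      omega
    rcases Nat.eq_or_lt_of_le hta with h | h
    · rw [h]
      have hmod : a % 2 ^ L < b % 2 ^ L := by
        have e1 := Nat.mod_add_div a (2 ^ L)
        have e2 := Nat.mod_add_div b (2 ^ L)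
        rw [← h] at e2
        have e3 : a % 2 ^ L + 2 ^ L * (a / 2 ^ L) < b % 2 ^ L + 2 ^ L * (a / 2 ^ L) := by
          rw [e1, e2]; exact hab
        exact Nat.lt_of_add_lt_add_right e3
      have hlt := IH (a % 2 ^ L) (b % 2 ^ L) hmod (Nat.mod_lt _ h2L)
      have := mul_lt_mul_of_pos_left hlt hβ0
      linarith
    · have ha0 : a / 2 ^ L = 0 := Nat.lt_one_iff.mp (lt_of_lt_of_le h htb)
      have hb1 : b / 2 ^ L = 1 :=
        Nat.le_antisymm htb (Nat.lt_of_le_of_lt (Nat.zero_le _) h)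
      rw [ha0, hb1]
      have h1 : β * wsum β (bw L (a % 2 ^ L)) L < 1 :=
        hsc_wsum_lt_inv hβ0.le hβh _ (fun i => bw_le_one _ _ _) L
      have h2 : 0 ≤ β * wsum β (bw L (b % 2 ^ L)) L :=
        mul_nonneg hβ0.le (wsum_nonneg hβ0.le _ _)
      norm_num
      linarith

/-- Zero-padded word from a `Fin`-indexed word. -/
def padf (Nn L : ℕ) (v : Fin L → Fin Nn) : ℕ → ℕ :=
  fun i => if h : i < L then (v ⟨i, h⟩ : ℕ) else 0

lemma padf_le {N L : ℕ} (v : Fin L → Fin (N+1)) (i : ℕ) : padf (N+1) L v i ≤ N := by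
  unfold padf
  split
  · exact Nat.lt_succ_iff.mp (v _).isLt
  · omega

/-- The numeral with binary digits `y (τ-1), …, y 0` (from least significant). -/
def numf (τ : ℕ) (y : ℕ → ℕ) : ℕ := ∑ k ∈ Finset.range τ, y (τ - 1 - k) * 2 ^ k

lemma bw_numf {y : ℕ → ℕ} (hy : ∀ i, y i ≤ 1) {τ i : ℕ} (hi : i < τ) :
    bw τ (numf τ y) i = y i := by
  unfold bw numf
  rw [hsc_bin_decode (fun k => y (τ - 1 - k)) (fun k => hy _) (show τ - 1 - i < τ by omega)]
  congr 1
  omega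

lemma numf_lt {y : ℕ → ℕ} (hy : ∀ i, y i ≤ 1) {τ : ℕ} (hτ : 0 < τ) (h0 : y 0 = 0) :
    numf τ y < 2 ^ (τ - 1) := by
  obtain ⟨σ, rfl⟩ : ∃ σ, τ = σ + 1 := ⟨τ - 1, by omega⟩
  unfold numf
  simp only [Nat.add_sub_cancel]
  rw [Finset.sum_range_succ, Nat.sub_self, h0, zero_mul, add_zero]
  exact hsc_bin_lt _ (fun k => hy _) _

/-- The similitudes used to exhibit `Γ_t` as a self-similar set. -/
def Phi (N m τ pp n : ℕ) (β : ℝ) (t : Fin (m+1) → ℝ)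
    (q : (Fin τ → Fin (N+1)) × (Fin pp → Fin (N+1)) × Fin (m+1)) : ℝ × ℝ :=
  if padf (N+1) τ q.1 0 = N then
    (-(β ^ n), t q.2.2 + β ^ τ * ((1 - β) / N * wsum β (padf (N+1) pp q.2.1) pp)
      + (1 - β) / N * wsum β (fun i => min (padf (N+1) τ q.1 i + 1) N) τ + β ^ n)
  else
    (β ^ n, t q.2.2 + β ^ τ * ((1 - β) / N * wsum β (padf (N+1) pp q.2.1) pp)
      + (1 - β) / N * wsum β (fun i => min (padf (N+1) τ q.1 i) (N-1)) τ)

end Aux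

lemma wsum_sub {β : ℝ} {w v : ℕ → ℕ} (L : ℕ) (h : ∀ i, v i ≤ w i) :
    wsum β (fun i => w i - v i) L = wsum β w L - wsum β v L := by
  unfold wsum
  rw [← Finset.sum_sub_distrib]
  exact Finset.sum_congr rfl fun i _ => by rw [Nat.cast_sub (h i)]; ring

lemma wsum_bw_one {β : ℝ} (τ : ℕ) (hτ : 0 < τ) : wsum β (bw τ 1) τ = β ^ (τ - 1) := by
  unfold wsum
  rw [Finset.sum_eq_single (τ - 1)]
  · have h1 : bw τ 1 (τ - 1) = 1 := by unfold bw; rw [Nat.sub_self]; norm_num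
    rw [h1]; norm_num
  · intro i hi hne
    have hiτ : i < τ := Finset.mem_range.mp hi
    have h0 : bw τ 1 i = 0 := by
      unfold bw
      have h2 : (1:ℕ) < 2 ^ (τ - 1 - i) := Nat.one_lt_two_pow (by omega)
      rw [Nat.div_eq_of_lt h2]
    rw [h0]; norm_num
  · intro hne; exact absurd (Finset.mem_range.mpr (by omega)) hne

lemma tfun_inj (N : ℕ) (hN : 0 < N) (β : ℝ) (hβ0 : 0 < β) (hβ1 : β < 1) (m : ℕ)
    (hm : 1 ≤ m) : Function.Injective (fun p : ℕ => tfun N β m p) := by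
  intro p q h
  set τ : ℕ := Nat.log 2 m + 1 with hτdef
  have hτpos : 0 < τ := Nat.succ_pos _
  have h1 : (β ^ (τ + p))⁻¹ * ((1 - β) / N * wsum β (bw τ 1) τ)
      = (β ^ (τ + q))⁻¹ * ((1 - β) / N * wsum β (bw τ 1) τ) := congrFun h ⟨1, by omega⟩
  rw [wsum_bw_one τ hτpos, ← mul_assoc, ← mul_assoc] at h1
  have hNR : (0:ℝ) < N := by exact_mod_cast hN
  have hC : (0:ℝ) < (1 - β) / N * β ^ (τ - 1) :=
    mul_pos (div_pos (by linarith) hNR) (by positivity)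
  have h2 : (β ^ (τ + p))⁻¹ * ((1 - β) / N) * β ^ (τ - 1)
      = (β ^ (τ + q))⁻¹ * ((1 - β) / N) * β ^ (τ - 1) := h1
  have h3 : (β ^ (τ + p))⁻¹ = (β ^ (τ + q))⁻¹ := by
    have hβτ : (0:ℝ) < β ^ (τ - 1) := by positivity
    have hD : (0:ℝ) < (1 - β) / N := div_pos (by linarith) hNR
    have e1 := mul_right_cancel₀ (ne_of_gt hβτ) h2
    exact mul_right_cancel₀ (ne_of_gt hD) e1
  have h4 : β ^ (τ + p) = β ^ (τ + q) := inv_injective h3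
  by_contra hne
  rcases Nat.lt_or_ge p q with hlt | hge
  · have := pow_lt_pow_right_of_lt_one₀ hβ0 hβ1 (show τ + p < τ + q by omega)
    rw [h4] at this
    exact lt_irrefl _ this
  · have hlt : q < p := by omega
    have := pow_lt_pow_right_of_lt_one₀ hβ0 hβ1 (show τ + q < τ + p by omega)
    rw [← h4] at this
    exact lt_irrefl _ this

lemma tfun_mem (N : ℕ) (hN : 0 < N) (β : ℝ) (hβ0 : 0 < β) (hβ1 : β < 1 / (N + 1))
    (m : ℕ) (hm : 1 ≤ m) (p : ℕ) :
    tfun N β m p 0 = 0 ∧ StrictMono (tfun N β m p) ∧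
      IsSelfSimilar (GammaT N β (tfun N β m p)) := by
  classical
  have hNR : (0:ℝ) < N := by exact_mod_cast hN
  have hN1 : (1:ℝ) ≤ N := by exact_mod_cast hN
  have hβh : β < 1 / 2 := by
    have h2 : (1:ℝ) / (N + 1) ≤ 1 / 2 := by
      rw [div_le_div_iff₀ (by positivity) (by norm_num)]
      linarith
    linarith
  have hβlt1 : β < 1 := by linarith
  set τ : ℕ := Nat.log 2 m + 1 with hτdef
  set n : ℕ := τ + p with hndef
  set t : Fin (m + 1) → ℝ := tfun N β m p with htdef
  set D : ℝ := (1 - β) / N with hDdef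
  have hD : 0 < D := div_pos (by linarith) hNR
  have hτpos : 0 < τ := Nat.succ_pos _
  have hm2 : m < 2 ^ τ := Nat.lt_pow_succ_log_self (by norm_num) m
  have h2m : 2 ^ (τ - 1) ≤ m := by
    rw [hτdef, Nat.add_sub_cancel]
    exact Nat.pow_log_le_self 2 (by omega)
  have hβn : (0:ℝ) < β ^ n := by positivity
  have hβninv : β ^ n * (β ^ n)⁻¹ = 1 := mul_inv_cancel₀ (ne_of_gt hβn)
  have ht : ∀ j : Fin (m + 1), t j = (β ^ n)⁻¹ * (D * wsum β (bw τ (j : ℕ)) τ) :=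
    fun j => rfl
  refine ⟨?_, ?_, ?_⟩
  · -- t 0 = 0
    rw [ht 0]
    have h0 : wsum β (bw τ ((0 : Fin (m+1)) : ℕ)) τ = 0 := by
      unfold wsum
      apply Finset.sum_eq_zero
      intro i _
      have hb : bw τ ((0 : Fin (m+1)) : ℕ) i = 0 := by
        unfold bw
        simp
      rw [hb]
      norm_num
    rw [h0]
    ring
  · -- StrictMono
    intro a b hab
    rw [ht a, ht b]
    have hb2 : (b : ℕ) < 2 ^ τ := by have := b.isLt; omega
    have hmono := hsc_fL_mono hβ0 hβh τ (a : ℕ) (b : ℕ) (Fin.lt_def.mp hab) hb2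
    exact mul_lt_mul_of_pos_left (mul_lt_mul_of_pos_left hmono hD) (inv_pos.mpr hβn)
  · -- IsSelfSimilar
    have hΓc : IsCompact (Gamma N β) := gamma_compact hβ0.le hβlt1
    have hmemE : ∀ (γ : ℝ) (j : Fin (m+1)), γ ∈ Gamma N β → γ + t j ∈ GammaT N β t := by
      intro γ j hγ
      show γ + t j ∈ ⋃ j, (fun x => x + t j) '' Gamma N β
      exact Set.mem_iUnion.mpr ⟨j, ⟨γ, hγ, rfl⟩⟩
    refine ⟨⟨0 + t 0, hmemE 0 0 gamma_zero⟩, ?_, ?_⟩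
    · show IsCompact (⋃ j, (fun x => x + t j) '' Gamma N β)
      exact isCompact_iUnion fun j => hΓc.image (continuous_id.add continuous_const)
    · refine ⟨Finset.image (Phi N m τ p n β t) Finset.univ, ?_, ?_⟩
      · -- contraction ratios
        intro pr hpr
        obtain ⟨q, -, rfl⟩ := Finset.mem_image.mp hpr
        have hn0 : n ≠ 0 := by omega
        have hlt1 : β ^ n < 1 := pow_lt_one₀ hβ0.le hβlt1 hn0
        unfold Phi
        split_ifs with hc <;>
          constructor <;>
          simp only [abs_neg] <;>
          rw [abs_of_pos hβn]
        · exact hβn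
        · exact hlt1
        · exact hβn
        · exact hlt1
      · -- the set equation
        apply Set.Subset.antisymm
        · -- Γ_t ⊆ union of images
          intro zz hzz
          have hzz' : zz ∈ ⋃ j, (fun x => x + t j) '' Gamma N β := hzz
          rw [Set.mem_iUnion] at hzz'
          obtain ⟨j, γ, hγ, rfl⟩ := hzz'
          obtain ⟨w, γ', hwN, hγ', hdec⟩ := gamma_decomp hβ0.le hβlt1 n hγ
          set xq : Fin τ → Fin (N+1) := fun i => ⟨w (i : ℕ), Nat.lt_succ_of_le (hwN _)⟩ with hxq
          set hq : Fin p → Fin (N+1) := fun i => ⟨w (τ + (i : ℕ)), Nat.lt_succ_of_le (hwN _)⟩ with hhq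
          have hpadx : ∀ i, i < τ → padf (N+1) τ xq i = w i := by
            intro i hi
            unfold padf
            rw [dif_pos hi]
          have hpadh : ∀ i, i < p → padf (N+1) p hq i = w (τ + i) := by
            intro i hi
            unfold padf
            rw [dif_pos hi]
          have hhigh : wsum β (padf (N+1) p hq) p = wsum β (fun i => w (τ + i)) p :=
            wsum_congr fun i hi => hpadh i hi
          have hsplitn : wsum β w n = wsum β w τ + β ^ τ * wsum β (fun i => w (τ + i)) p := by
            rw [hndef]; exact wsum_split w τ p
          by_cases hw0 : w 0 = N
          · -- reflected map
            set y : ℕ → ℕ := fun i => if w i = N then 0 else 1 with hy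
            have hy1 : ∀ i, y i ≤ 1 := by
              intro i; rw [hy]; dsimp only; split <;> omega
            have hy0 : y 0 = 0 := by rw [hy]; dsimp only; rw [if_pos hw0]
            have hnum : numf τ y < 2 ^ (τ - 1) := numf_lt hy1 hτpos hy0
            have hnumm : numf τ y < m + 1 := by omega
            set jy : Fin (m+1) := ⟨numf τ y, hnumm⟩ with hjy
            have hbwy : ∀ i, i < τ → bw τ (jy : ℕ) i = y i := fun i hi => bw_numf hy1 hi
            have hcond : padf (N+1) τ xq 0 = N := by rw [hpadx 0 hτpos]; exact hw0
            refine Set.mem_iUnion₂.mpr ⟨Phi N m τ p n β t (xq, hq, j),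
              Finset.mem_image_of_mem _ (Finset.mem_univ _), ?_⟩
            refine ⟨(1 - γ') + t jy, hmemE _ jy (gamma_symm hN hβ0.le hβlt1 hγ'), ?_⟩
            have hΦ : Phi N m τ p n β t (xq, hq, j) = (-(β ^ n),
                t j + β ^ τ * (D * wsum β (padf (N+1) p hq) p)
                + D * wsum β (fun i => min (padf (N+1) τ xq i + 1) N) τ + β ^ n) := by
              unfold Phi
              rw [if_pos hcond]
            rw [hΦ]
            dsimp only
            have hlow : wsum β (bw τ (jy : ℕ)) τ + wsum β w τ
                = wsum β (fun i => min (padf (N+1) τ xq i + 1) N) τ := by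
              rw [← wsum_add]
              apply wsum_congr
              intro i hi
              rw [hbwy i hi, hpadx i hi, hy]
              dsimp only
              by_cases hwi : w i = N
              · rw [if_pos hwi, hwi]; omega
              · rw [if_neg hwi]; have := hwN i; omega
            rw [hdec, hsplitn, hhigh, ht jy]
            linear_combination (-(D * wsum β (bw τ ((jy : Fin (m+1)) : ℕ)) τ)) * hβninv
              + (-D) * hlow
          · -- direct map
            set y : ℕ → ℕ := fun i => if w i = N then 1 else 0 with hy
            have hy1 : ∀ i, y i ≤ 1 := by
              intro i; rw [hy]; dsimp only; split <;> omega
            have hy0 : y 0 = 0 := by rw [hy]; dsimp only; rw [if_neg hw0]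
            have hnum : numf τ y < 2 ^ (τ - 1) := numf_lt hy1 hτpos hy0
            have hnumm : numf τ y < m + 1 := by omega
            set jy : Fin (m+1) := ⟨numf τ y, hnumm⟩ with hjy
            have hbwy : ∀ i, i < τ → bw τ (jy : ℕ) i = y i := fun i hi => bw_numf hy1 hi
            have hcond : ¬ (padf (N+1) τ xq 0 = N) := by rw [hpadx 0 hτpos]; exact hw0
            refine Set.mem_iUnion₂.mpr ⟨Phi N m τ p n β t (xq, hq, j),
              Finset.mem_image_of_mem _ (Finset.mem_univ _), ?_⟩
            refine ⟨γ' + t jy, hmemE _ jy hγ', ?_⟩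
            have hΦ : Phi N m τ p n β t (xq, hq, j) = (β ^ n,
                t j + β ^ τ * (D * wsum β (padf (N+1) p hq) p)
                + D * wsum β (fun i => min (padf (N+1) τ xq i) (N-1)) τ) := by
              unfold Phi
              rw [if_neg hcond]
            rw [hΦ]
            dsimp only
            have hlow : wsum β (bw τ (jy : ℕ)) τ
                + wsum β (fun i => min (padf (N+1) τ xq i) (N-1)) τ = wsum β w τ := by
              rw [← wsum_add]
              apply wsum_congr
              intro i hi
              rw [hbwy i hi, hpadx i hi, hy]
              dsimp only
              by_cases hwi : w i = N
              · rw [if_pos hwi, hwi]; omega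
              · rw [if_neg hwi]; have := hwN i; omega
            rw [hdec, hsplitn, hhigh, ht jy]
            linear_combination (D * wsum β (bw τ ((jy : Fin (m+1)) : ℕ)) τ) * hβninv
              + D * hlow
        · -- union of images ⊆ Γ_t
          intro zz hzz
          rw [Set.mem_iUnion₂] at hzz
          obtain ⟨pr, hpr, hzim⟩ := hzz
          obtain ⟨q, -, rfl⟩ := Finset.mem_image.mp hpr
          obtain ⟨z₀, hz₀, rfl⟩ := hzim
          obtain ⟨j', γ, hγ, rfl⟩ : ∃ (j' : Fin (m+1)) (γ : ℝ), γ ∈ Gamma N β ∧ z₀ = γ + t j' := by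
            have hz₀' : z₀ ∈ ⋃ j, (fun x => x + t j) '' Gamma N β := hz₀
            rw [Set.mem_iUnion] at hz₀'
            obtain ⟨j', γ, hγ, heq⟩ := hz₀'
            exact ⟨j', γ, hγ, heq.symm⟩
          by_cases hc : padf (N+1) τ q.1 0 = N
          · -- reflected map
            have hΦ : Phi N m τ p n β t q = (-(β ^ n),
                t q.2.2 + β ^ τ * (D * wsum β (padf (N+1) p q.2.1) p)
                + D * wsum β (fun i => min (padf (N+1) τ q.1 i + 1) N) τ + β ^ n) := by
              unfold Phi
              rw [if_pos hc]
            rw [hΦ]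
            dsimp only
            set g : ℕ → ℕ := fun i => min (padf (N+1) τ q.1 i + 1) N with hg
            set u : ℕ → ℕ := fun i => if i < τ then g i - bw τ (j' : ℕ) i
              else padf (N+1) p q.2.1 (i - τ) with hu
            have hgbw : ∀ i, bw τ (j' : ℕ) i ≤ g i := by
              intro i
              have h1 := bw_le_one τ (j' : ℕ) i
              have h2 : 1 ≤ g i := by rw [hg]; dsimp only; omega
              omega
            have huN : ∀ i, u i ≤ N := by
              intro i
              rw [hu]; dsimp only
              split
              · have h3 : g i ≤ N := by rw [hg]; dsimp only; omega
                omega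
              · exact padf_le _ _
            have helem : β ^ n * (1 - γ) + D * wsum β u n ∈ Gamma N β :=
              gamma_add_word hβ0.le hβlt1 u huN n (gamma_symm hN hβ0.le hβlt1 hγ)
            have husplit : wsum β u n = wsum β u τ + β ^ τ * wsum β (fun i => u (τ + i)) p := by
              rw [hndef]; exact wsum_split u τ p
            have huτ : wsum β u τ = wsum β g τ - wsum β (bw τ (j' : ℕ)) τ := by
              have h1 : wsum β u τ = wsum β (fun i => g i - bw τ (j' : ℕ) i) τ :=
                wsum_congr fun i hi => by rw [hu]; dsimp only; rw [if_pos hi]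
              rw [h1, wsum_sub τ hgbw]
            have huh : wsum β (fun i => u (τ + i)) p = wsum β (padf (N+1) p q.2.1) p := by
              apply wsum_congr
              intro i hi
              rw [hu]; dsimp only
              rw [if_neg (by omega)]
              congr 1
              omega
            have hkey : -(β ^ n) * (γ + t j') + (t q.2.2
                + β ^ τ * (D * wsum β (padf (N+1) p q.2.1) p)
                + D * wsum β g τ + β ^ n)
                = (β ^ n * (1 - γ) + D * wsum β u n) + t q.2.2 := by
              rw [ht j', husplit, huτ, huh]
              linear_combination (-(D * wsum β (bw τ ((j' : Fin (m+1)) : ℕ)) τ)) * hβninv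
            rw [hkey]
            exact hmemE _ _ helem
          · -- direct map
            have hΦ : Phi N m τ p n β t q = (β ^ n,
                t q.2.2 + β ^ τ * (D * wsum β (padf (N+1) p q.2.1) p)
                + D * wsum β (fun i => min (padf (N+1) τ q.1 i) (N-1)) τ) := by
              unfold Phi
              rw [if_neg hc]
            rw [hΦ]
            dsimp only
            set g : ℕ → ℕ := fun i => min (padf (N+1) τ q.1 i) (N-1) with hg
            set u : ℕ → ℕ := fun i => if i < τ then g i + bw τ (j' : ℕ) i
              else padf (N+1) p q.2.1 (i - τ) with hu
            have huN : ∀ i, u i ≤ N := by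
              intro i
              rw [hu]; dsimp only
              split
              · have h1 := bw_le_one τ (j' : ℕ) i
                have h3 : g i ≤ N - 1 := by rw [hg]; dsimp only; omega
                omega
              · exact padf_le _ _
            have helem : β ^ n * γ + D * wsum β u n ∈ Gamma N β :=
              gamma_add_word hβ0.le hβlt1 u huN n hγ
            have husplit : wsum β u n = wsum β u τ + β ^ τ * wsum β (fun i => u (τ + i)) p := by
              rw [hndef]; exact wsum_split u τ p
            have huτ : wsum β u τ = wsum β g τ + wsum β (bw τ (j' : ℕ)) τ := by
              have h1 : wsum β u τ = wsum β (fun i => g i + bw τ (j' : ℕ) i) τ :=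
                wsum_congr fun i hi => by rw [hu]; dsimp only; rw [if_pos hi]
              rw [h1, wsum_add]
            have huh : wsum β (fun i => u (τ + i)) p = wsum β (padf (N+1) p q.2.1) p := by
              apply wsum_congr
              intro i hi
              rw [hu]; dsimp only
              rw [if_neg (by omega)]
              congr 1
              omega
            have hkey : β ^ n * (γ + t j') + (t q.2.2
                + β ^ τ * (D * wsum β (padf (N+1) p q.2.1) p)
                + D * wsum β g τ)
                = (β ^ n * γ + D * wsum β u n) + t q.2.2 := by
              rw [ht j', husplit, huτ, huh]
              linear_combination (D * wsum β (bw τ ((j' : Fin (m+1)) : ℕ)) τ) * hβninv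
            rw [hkey]
            exact hmemE _ _ helem

/-- For every positive integer `N`, every `0 < β < 1/(N+1)` and every `m ∈ ℤ_+`, there are
infinitely many translation vectors `t = (t_0,…,t_m)` with `0 = t_0 < t_1 < ⋯ < t_m` such
that `Γ_t = ⋃_{j=0}^m (Γ + t_j)` is a self-similar set. -/
theorem stmt0 (N : ℕ) (hN : 0 < N) (β : ℝ) (hβ0 : 0 < β) (hβ1 : β < 1 / (N + 1))
    (m : ℕ) (hm : 1 ≤ m) :
    { t : Fin (m + 1) → ℝ | t 0 = 0 ∧ StrictMono t ∧
        IsSelfSimilar (GammaT N β t) }.Infinite := by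
  have hN1 : (1:ℝ) ≤ N := by exact_mod_cast hN
  have hβlt1 : β < 1 := by
    have h2 : (1:ℝ) / (N + 1) ≤ 1 := by
      rw [div_le_one (by positivity)]
      linarith
    linarith
  apply Set.infinite_of_injective_forall_mem (f := fun p : ℕ => tfun N β m p)
    (tfun_inj N hN β hβ0 hβlt1 m hm)
  intro p
  exact tfun_mem N hN β hβ0 hβ1 m hm p

end HSCantor
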